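/- Let α > 1, ζ ∈ (0,1), η > 0, K ≥ 2 an integer, i* ∈ {1,…,K}, and λ ∈ [0,∞)^K with λ_{i*} = 0. Define F(y) := 1 − y^{-α} for y ≥ 1 and F(y) := 0 for y < 1, and f(y) := α y^{-(α+1)} for y ≥ 1 and f(y) := 0 for y < 1. Then for every x with 0 ≤ x ≤ ζ/η: ∫_1^∞ f(z) · ∑_{i≠i*} η f(z + η(λ_i − x)) ∏_{j≠i, j≠i*} F(z + η(λ_j − x)) dz ≤ ∑_{i≠i*} e(1 − e^{-1}) η α / ( (1−ζ)^{α+1} (1 + ηλ_i)^{α+1} ). -/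
import Mathlib


/-- The Pareto(α) CDF, extended by `0` below `1`. -/
noncomputable def paretoCDF' (α y : ℝ) : ℝ := if 1 ≤ y then 1 - y ^ (-α) else 0

/-- The Pareto(α) density, extended by `0` below `1`. -/
noncomputable def paretoPDF' (α y : ℝ) : ℝ := if 1 ≤ y then α * y ^ (-(α + 1)) else 0

open MeasureTheory Set Real

lemma paretoPDF'_nonneg {α : ℝ} (hα : 0 < α) (y : ℝ) : 0 ≤ paretoPDF' α y := by
  unfold paretoPDF'
  split
  · exact mul_nonneg hα.le (Real.rpow_nonneg (by linarith) _)
  · exact le_refl 0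

lemma paretoCDF'_nonneg {α : ℝ} (hα : 0 < α) (y : ℝ) : 0 ≤ paretoCDF' α y := by
  unfold paretoCDF'
  split
  · rename_i h
    have : y ^ (-α) ≤ 1 := Real.rpow_le_one_of_one_le_of_nonpos h (by linarith)
    linarith
  · exact le_refl 0

lemma paretoCDF'_le_one {α : ℝ} (hα : 0 < α) (y : ℝ) : paretoCDF' α y ≤ 1 := by
  unfold paretoCDF'
  split
  · rename_i h
    have : (0:ℝ) ≤ y ^ (-α) := Real.rpow_nonneg (by linarith) _
    linarith
  · exact zero_le_one

/-- key pointwise bound on the shifted density -/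
lemma paretoPDF'_shift_bound {α ζ η : ℝ} (hα : 1 < α) (hζ0 : 0 < ζ) (hζ1 : ζ < 1)
    (hη : 0 < η) {b x z : ℝ} (hb : 0 ≤ b) (hx0 : 0 ≤ x) (hxζ : η * x ≤ ζ) (hz : 1 ≤ z) :
    paretoPDF' α (z + η * (b - x)) ≤ α / ((1 - ζ) ^ (α + 1) * (1 + η * b) ^ (α + 1)) := by
  have hα0 : (0:ℝ) < α := by linarith
  have hA : (0:ℝ) < (1 - ζ) * (1 + η * b) := by
    have h1 : (0:ℝ) < 1 - ζ := by linarith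
    have h2 : (0:ℝ) < 1 + η * b := by nlinarith
    exact mul_pos h1 h2
  have hAle : (1 - ζ) * (1 + η * b) ≤ z + η * (b - x) := by
    nlinarith [mul_nonneg (mul_nonneg hζ0.le hη.le) hb]
  have hApow : ((1 - ζ) * (1 + η * b)) ^ (α + 1)
      = (1 - ζ) ^ (α + 1) * (1 + η * b) ^ (α + 1) :=
    Real.mul_rpow (by linarith) (by nlinarith)
  have hApow_pos : (0:ℝ) < ((1 - ζ) * (1 + η * b)) ^ (α + 1) :=
    Real.rpow_pos_of_pos hA _
  unfold paretoPDF'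
  split
  · rename_i h
    have hw : (0:ℝ) < z + η * (b - x) := by linarith
    rw [Real.rpow_neg hw.le, ← div_eq_mul_inv]
    rw [← hApow]
    apply div_le_div_of_nonneg_left hα0.le hApow_pos
    exact Real.rpow_le_rpow hA.le hAle (by linarith)
  · rw [← hApow]
    positivity

theorem ftpl_pareto_optimal_arm_derivative_bound
    (α ζ η : ℝ) (hα : 1 < α) (hζ0 : 0 < ζ) (hζ1 : ζ < 1) (hη : 0 < η)
    (K : ℕ) (hK : 2 ≤ K) (istar : Fin K)
    (lam : Fin K → ℝ) (hlam : ∀ j, 0 ≤ lam j) (hstar : lam istar = 0)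
    (x : ℝ) (hx0 : 0 ≤ x) (hx : x ≤ ζ / η) :
    (∫ z in Set.Ioi (1 : ℝ),
        paretoPDF' α z *
          ∑ i ∈ Finset.univ.erase istar,
            η * paretoPDF' α (z + η * (lam i - x)) *
              ∏ j ∈ (Finset.univ.erase istar).erase i,
                paretoCDF' α (z + η * (lam j - x)))
      ≤ ∑ i ∈ Finset.univ.erase istar,
          Real.exp 1 * (1 - Real.exp (-1)) * η * α /
            ((1 - ζ) ^ (α + 1) * (1 + η * lam i) ^ (α + 1)) := by
  have hα0 : (0:ℝ) < α := by linarith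
  have hxζ : η * x ≤ ζ := by
    rw [mul_comm]
    exact (le_div_iff₀ hη).mp hx
  set C : ℝ := ∑ i ∈ Finset.univ.erase istar,
      η * (α / ((1 - ζ) ^ (α + 1) * (1 + η * lam i) ^ (α + 1))) with hC
  have hdenpos : ∀ i : Fin K, (0:ℝ) < (1 - ζ) ^ (α + 1) * (1 + η * lam i) ^ (α + 1) := by
    intro i
    have h1 : (0:ℝ) < 1 - ζ := by linarith
    have h2 : (0:ℝ) < 1 + η * lam i := by nlinarith [hlam i]
    exact mul_pos (Real.rpow_pos_of_pos h1 _) (Real.rpow_pos_of_pos h2 _)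
  have hCnn : 0 ≤ C := by
    apply Finset.sum_nonneg
    intro i _
    have := hdenpos i
    positivity
  -- pointwise bound on Ioi 1
  have hpt : ∀ z ∈ Ioi (1:ℝ),
      paretoPDF' α z *
          ∑ i ∈ Finset.univ.erase istar,
            η * paretoPDF' α (z + η * (lam i - x)) *
              ∏ j ∈ (Finset.univ.erase istar).erase i,
                paretoCDF' α (z + η * (lam j - x))
        ≤ paretoPDF' α z * C := by
    intro z hz
    have hz1 : (1:ℝ) ≤ z := le_of_lt hz
    apply mul_le_mul_of_nonneg_left _ (paretoPDF'_nonneg hα0 z)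
    apply Finset.sum_le_sum
    intro i _
    have hprod : (∏ j ∈ (Finset.univ.erase istar).erase i,
        paretoCDF' α (z + η * (lam j - x))) ≤ 1 := by
      apply Finset.prod_le_one
      · intro j _; exact paretoCDF'_nonneg hα0 _
      · intro j _; exact paretoCDF'_le_one hα0 _
    have hprodnn : (0:ℝ) ≤ ∏ j ∈ (Finset.univ.erase istar).erase i,
        paretoCDF' α (z + η * (lam j - x)) :=
      Finset.prod_nonneg fun j _ => paretoCDF'_nonneg hα0 _
    calc η * paretoPDF' α (z + η * (lam i - x)) *
          ∏ j ∈ (Finset.univ.erase istar).erase i, paretoCDF' α (z + η * (lam j - x))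
        ≤ η * paretoPDF' α (z + η * (lam i - x)) * 1 := by
          apply mul_le_mul_of_nonneg_left hprod
          exact mul_nonneg hη.le (paretoPDF'_nonneg hα0 _)
      _ = η * paretoPDF' α (z + η * (lam i - x)) := mul_one _
      _ ≤ η * (α / ((1 - ζ) ^ (α + 1) * (1 + η * lam i) ^ (α + 1))) := by
          apply mul_le_mul_of_nonneg_left _ hη.le
          exact paretoPDF'_shift_bound hα hζ0 hζ1 hη (hlam i) hx0 hxζ hz1
  -- integrability of the dominating function
  have hint : IntegrableOn (fun z => paretoPDF' α z * C) (Ioi (1:ℝ)) := by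
    have h1 : IntegrableOn (fun z : ℝ => z ^ (-(α + 1))) (Ioi (1:ℝ)) :=
      integrableOn_Ioi_rpow_of_lt (by linarith) one_pos
    have h2 : IntegrableOn (fun z : ℝ => α * z ^ (-(α + 1)) * C) (Ioi (1:ℝ)) :=
      (h1.const_mul α).mul_const C
    apply h2.congr_fun _ measurableSet_Ioi
    intro z hz
    simp only [paretoPDF', if_pos (le_of_lt (mem_Ioi.mp hz))]
  have hnn : 0 ≤ᵐ[volume.restrict (Ioi (1:ℝ))] fun z =>
      paretoPDF' α z *
          ∑ i ∈ Finset.univ.erase istar,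
            η * paretoPDF' α (z + η * (lam i - x)) *
              ∏ j ∈ (Finset.univ.erase istar).erase i,
                paretoCDF' α (z + η * (lam j - x)) := by
    apply Filter.Eventually.of_forall
    intro z
    apply mul_nonneg (paretoPDF'_nonneg hα0 z)
    apply Finset.sum_nonneg
    intro i _
    exact mul_nonneg (mul_nonneg hη.le (paretoPDF'_nonneg hα0 _))
      (Finset.prod_nonneg fun j _ => paretoCDF'_nonneg hα0 _)
  have hle : (fun z =>
      paretoPDF' α z *
          ∑ i ∈ Finset.univ.erase istar,
            η * paretoPDF' α (z + η * (lam i - x)) *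
              ∏ j ∈ (Finset.univ.erase istar).erase i,
                paretoCDF' α (z + η * (lam j - x)))
      ≤ᵐ[volume.restrict (Ioi (1:ℝ))] fun z => paretoPDF' α z * C := by
    rw [Filter.EventuallyLE, ae_restrict_iff' measurableSet_Ioi]
    exact Filter.Eventually.of_forall hpt
  have hstep : (∫ z in Set.Ioi (1 : ℝ),
        paretoPDF' α z *
          ∑ i ∈ Finset.univ.erase istar,
            η * paretoPDF' α (z + η * (lam i - x)) *
              ∏ j ∈ (Finset.univ.erase istar).erase i,
                paretoCDF' α (z + η * (lam j - x)))
      ≤ ∫ z in Set.Ioi (1:ℝ), paretoPDF' α z * C :=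
    integral_mono_of_nonneg hnn hint hle
  -- compute the dominating integral
  have hval : ∫ z in Set.Ioi (1:ℝ), paretoPDF' α z * C = C := by
    rw [MeasureTheory.integral_mul_const]
    have : ∫ z in Set.Ioi (1:ℝ), paretoPDF' α z
        = ∫ z in Set.Ioi (1:ℝ), α * z ^ (-(α + 1)) := by
      apply setIntegral_congr_fun measurableSet_Ioi
      intro z hz
      simp only [paretoPDF', if_pos (le_of_lt (mem_Ioi.mp hz))]
    rw [this, MeasureTheory.integral_const_mul,
      integral_Ioi_rpow_of_lt (by linarith : -(α+1) < -1) one_pos]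
    have : -(α + 1) + 1 = -α := by ring
    rw [this, Real.one_rpow]
    field_simp
  rw [hval] at hstep
  refine hstep.trans ?_
  -- C ≤ RHS since 1 ≤ e (1 - e⁻¹) = e - 1
  have he : (1:ℝ) ≤ Real.exp 1 * (1 - Real.exp (-1)) := by
    have h1 : Real.exp 1 * (1 - Real.exp (-1)) = Real.exp 1 - 1 := by
      have : Real.exp 1 * Real.exp (-1) = 1 := by
        rw [← Real.exp_add]; norm_num
      ring_nf
      nlinarith [this]
    rw [h1]
    nlinarith [Real.add_one_le_exp (1:ℝ)]
  rw [hC]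
  apply Finset.sum_le_sum
  intro i _
  have hd := hdenpos i
  rw [div_eq_mul_inv, div_eq_mul_inv]
  have hterm : η * (α * ((1 - ζ) ^ (α + 1) * (1 + η * lam i) ^ (α + 1))⁻¹)
      = (η * α) * ((1 - ζ) ^ (α + 1) * (1 + η * lam i) ^ (α + 1))⁻¹ := by ring
  rw [hterm]
  apply mul_le_mul_of_nonneg_right _ (inv_nonneg.mpr hd.le)
  nlinarith [mul_le_mul_of_nonneg_right he (mul_nonneg hη.le hα0.le)]
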